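/- Let k be a field of characteristic p > 0, let G be a nontrivial finite p-group acting by automorphisms on a finitely generated torsion-free abelian group A, and assume the action has trivial stabilizers away from the identity, i.e., for every a ∈ A with a ≠ 1, the only g ∈ G with g·a = a is g = 1. Let Λ = Σ_{g∈G} g ∈ kG act on the group algebra kA. Then the quotient k-vector space (kA)^G / Λ·kA is one-dimensional over k. -/

import Mathlib

universe u

/-- The action of `g : G` on the group algebra `kA`, induced by an action
`φ : G →* MulAut A` on the group `A`, as a `k`-algebra endomorphism. -/
noncomputable def gAct (k : Type u) {A G : Type u} [Field k] [Group A] [Group G]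
    (φ : G →* MulAut A) (g : G) :
    MonoidAlgebra k A →ₐ[k] MonoidAlgebra k A :=
  MonoidAlgebra.mapDomainAlgHom k k (φ g)

/-- The invariant subalgebra `(kA)^G` of the group algebra `kA`. -/
def invAlg (k : Type u) {A G : Type u} [Field k] [Group A] [Group G]
    (φ : G →* MulAut A) : Subalgebra k (MonoidAlgebra k A) where
  carrier := {r | ∀ g : G, gAct k φ g r = r}
  mul_mem' := fun {a b} ha hb g => by rw [map_mul, ha g, hb g]
  one_mem' := fun g => map_one _
  add_mem' := fun {a b} ha hb g => by rw [map_add, ha g, hb g]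
  zero_mem' := fun g => map_zero _
  algebraMap_mem' := fun c g => (gAct k φ g).commutes c

/-- The orbit-sum operator `r ↦ Λ·r = Σ_{g ∈ G} g·r` on the group algebra `kA`,
i.e. the action of the integral `Λ = Σ_{g ∈ G} g` of `kG`. -/
noncomputable def orbitSum (k : Type u) {A G : Type u} [Field k] [Group A] [Group G]
    [Fintype G] (φ : G →* MulAut A) :
    MonoidAlgebra k A →ₗ[k] MonoidAlgebra k A :=
  ∑ g : G, (gAct k φ g).toLinearMap


section Aux

variable {k : Type u} {A G : Type u} [Field k] [CommGroup A] [Group G] (φ : G →* MulAut A)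

lemma sub_coeff (r t : MonoidAlgebra k A) (b : A) : (r - t).coeff b = r.coeff b - t.coeff b := rfl

lemma smul_coeff (c : k) (r : MonoidAlgebra k A) (b : A) : (c • r).coeff b = c * r.coeff b := rfl

lemma gAct_apply (g : G) (r : MonoidAlgebra k A) :
    (gAct k φ g r).coeff = Finsupp.mapDomain (φ g) r.coeff := rfl

lemma gAct_coeff (g : G) (r : MonoidAlgebra k A) (a : A) :
    (gAct k φ g r).coeff (φ g a) = r.coeff a := by
  rw [gAct_apply]; exact Finsupp.mapDomain_apply (φ g).injective r.coeff a

lemma gAct_coeff' (g : G) (r : MonoidAlgebra k A) (b : A) :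
    (gAct k φ g r).coeff b = r.coeff ((φ g).symm b) := by
  conv_lhs => rw [← (φ g).apply_symm_apply b]
  exact gAct_coeff φ g r _

lemma inv_coeff {r : MonoidAlgebra k A} (hr : r ∈ invAlg k φ) (g : G) (a : A) :
    r.coeff (φ g a) = r.coeff a := by
  conv_lhs => rw [← hr g]
  exact gAct_coeff φ g r a

variable [Fintype G]

lemma orbitSum_apply (s : MonoidAlgebra k A) :
    orbitSum k φ s = ∑ g : G, gAct k φ g s := by
  rw [orbitSum, LinearMap.coe_sum, Finset.sum_apply]
  rfl

lemma orbitSum_coeff (s : MonoidAlgebra k A) (b : A) :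
    (orbitSum k φ s).coeff b = ∑ g : G, s.coeff ((φ g).symm b) := by
  rw [orbitSum_apply, MonoidAlgebra.coeff_sum, Finsupp.finset_sum_apply]
  exact Finset.sum_congr rfl fun g _ => gAct_coeff' φ g s b

omit [Fintype G] in
lemma gAct_gAct (g h : G) (s : MonoidAlgebra k A) :
    gAct k φ g (gAct k φ h s) = gAct k φ (g * h) s := by
  apply MonoidAlgebra.coeff_injective
  simp only [gAct_apply]
  rw [← Finsupp.mapDomain_comp]
  congr 1
  ext a
  simp [map_mul]

lemma orbitSum_mem_inv (s : MonoidAlgebra k A) : orbitSum k φ s ∈ invAlg k φ := by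
  intro g
  rw [orbitSum_apply, map_sum]
  rw [show (∑ h : G, gAct k φ g (gAct k φ h s)) = ∑ h : G, gAct k φ (g * h) s from
    Finset.sum_congr rfl fun h _ => gAct_gAct φ g h s]
  exact Fintype.sum_bijective (fun h => g * h) (Group.mulLeft_bijective g) _ _ fun h => rfl

lemma exists_preimage
    (hfree : ∀ a : A, a ≠ 1 → ∀ g : G, φ g a = a → g = 1) :
    ∀ (n : ℕ) (r : MonoidAlgebra k A), r.coeff.support.card ≤ n →
      (∀ (g : G) (a : A), r.coeff (φ g a) = r.coeff a) → r.coeff 1 = 0 →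
      ∃ s, orbitSum k φ s = r := by
  classical
  intro n
  induction n with
  | zero =>
    intro r hcard _ _
    refine ⟨0, ?_⟩
    rw [map_zero]
    symm
    exact MonoidAlgebra.coeff_eq_zero.mp (Finsupp.card_support_eq_zero.mp (Nat.le_zero.mp hcard))
  | succ n ih =>
    intro r hcard hinv h1
    by_cases hr : r = 0
    · exact ⟨0, by rw [map_zero, hr]⟩
    · obtain ⟨a, ha⟩ := Finsupp.support_nonempty_iff.mpr (mt MonoidAlgebra.coeff_eq_zero.mp hr)
      have hra : r.coeff a ≠ 0 := Finsupp.mem_support_iff.mp ha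
      have ha1 : a ≠ 1 := fun h => hra (h ▸ h1)
      set t : MonoidAlgebra k A := orbitSum k φ (MonoidAlgebra.single a (r.coeff a)) with ht
      -- coefficient of t on the orbit of a
      have htorb : ∀ g : G, t.coeff (φ g a) = r.coeff a := by
        intro g
        rw [ht, orbitSum_coeff]
        have key : ∀ h : G, (MonoidAlgebra.single a (r.coeff a) : MonoidAlgebra k A).coeff
            ((φ h).symm (φ g a)) = if h = g then r.coeff a else 0 := by
          intro h
          by_cases hh : h = g
          · subst hh
            rw [if_pos rfl, MonoidAlgebra.coeff_single, Finsupp.single_apply,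
              if_pos ((φ h).symm_apply_apply a).symm]
          · rw [if_neg hh, MonoidAlgebra.coeff_single, Finsupp.single_apply, if_neg]
            intro he
            apply hh
            have h2 : φ h a = φ g a := by
              conv_lhs => rw [he]
              exact (φ h).apply_symm_apply _
            have h3 : φ (g⁻¹ * h) a = a := by
              rw [map_mul]
              simp only [MulAut.mul_apply]
              rw [h2, map_inv]
              exact (φ g).symm_apply_apply a
            have h4 := hfree a ha1 _ h3
            rw [inv_mul_eq_one] at h4
            exact h4.symm
        rw [Finset.sum_congr rfl fun h _ => key h]
        simp
      -- coefficient of t off the orbit of a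
      have htoff : ∀ b : A, (∀ g : G, b ≠ φ g a) → t.coeff b = 0 := by
        intro b hb
        rw [ht, orbitSum_coeff]
        refine Finset.sum_eq_zero fun g _ => ?_
        rw [MonoidAlgebra.coeff_single, Finsupp.single_apply, if_neg]
        intro he
        exact hb g (by rw [he, MulEquiv.apply_symm_apply])
      have htinv : t ∈ invAlg k φ := orbitSum_mem_inv φ _
      set r' : MonoidAlgebra k A := r - t with hr'
      have hrc : ∀ b : A, r'.coeff b = r.coeff b - t.coeff b := fun b => rfl
      have hinv' : ∀ (g : G) (b : A), r'.coeff (φ g b) = r'.coeff b := by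
        intro g b
        rw [hrc, hrc, hinv g b, inv_coeff φ htinv g b]
      have h1' : r'.coeff 1 = 0 := by
        rw [hrc, h1,
          htoff 1 fun g he => ha1 ((φ g).injective (by rw [← he, map_one]))]
        ring
      have hsub : r'.coeff.support ⊆ r.coeff.support.erase a := by
        intro b hb
        rw [Finsupp.mem_support_iff] at hb
        rw [Finset.mem_erase, Finsupp.mem_support_iff]
        constructor
        · intro hba
          apply hb
          rw [hrc, hba]
          have h5 : t.coeff a = r.coeff a := by simpa using htorb 1
          rw [h5]
          ring
        · intro hrb
          apply hb
          rw [hrc, hrb, htoff b ?_]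
          · ring
          · rintro g rfl
            exact hra (by rw [← hinv g a]; exact hrb)
      have hcard' : r'.coeff.support.card ≤ n := by
        have h2 := Finset.card_le_card hsub
        rw [Finset.card_erase_of_mem ha] at h2
        omega
      obtain ⟨s', hs'⟩ := ih r' hcard' hinv' h1'
      refine ⟨(MonoidAlgebra.single a (r.coeff a) : MonoidAlgebra k A) + s', ?_⟩
      rw [map_add, hs', ← ht, hr']
      ring

end Aux

/-- Let k be a field of characteristic p > 0, G a nontrivial finite p-group
acting by automorphisms on a finitely generated torsion-free abelian group A with trivial
stabilizers away from the identity. Then (kA)^G / Λ·kA is one-dimensional over k, where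
Λ·kA is the image of the orbit-sum operator. -/
theorem stmt12 {k : Type u} {p : ℕ} [Field k] (hp : p.Prime) [CharP k p]
    {A G : Type u} [CommGroup A] [Group.FG A]
    (htf : ∀ a : A, a ≠ 1 → ¬IsOfFinOrder a)
    [Group G] [Fintype G] [Nontrivial G] (hpG : IsPGroup p G)
    (φ : G →* MulAut A)
    (hfree : ∀ a : A, a ≠ 1 → ∀ g : G, φ g a = a → g = 1) :
    Module.finrank k
      (↥(Subalgebra.toSubmodule (invAlg k φ)) ⧸
        Submodule.comap (Subalgebra.toSubmodule (invAlg k φ)).subtype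
          (LinearMap.range (orbitSum k φ))) = 1 := by
  classical
  have hGcard : (Fintype.card G : k) = 0 := by
    have hFp : Fact p.Prime := ⟨hp⟩
    obtain ⟨n, hn⟩ := IsPGroup.iff_card.mp hpG
    rw [Nat.card_eq_fintype_card] at hn
    have hdvd : p ∣ Fintype.card G := by
      cases n with
      | zero =>
        exfalso
        rw [pow_zero] at hn
        exact (Fintype.one_lt_card (α := G)).ne' hn
      | succ m => exact hn ▸ dvd_pow_self p (Nat.succ_ne_zero m)
    exact (CharP.cast_eq_zero_iff k p _).mpr hdvd
  set M := Subalgebra.toSubmodule (invAlg k φ) with hM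
  set N := Submodule.comap M.subtype (LinearMap.range (orbitSum k φ)) with hN
  have hone : (1 : MonoidAlgebra k A) ∈ invAlg k φ := (invAlg k φ).one_mem
  have hone_coeff : (1 : MonoidAlgebra k A).coeff (1 : A) = 1 := by
    rw [MonoidAlgebra.one_def, MonoidAlgebra.coeff_single, Finsupp.single_apply, if_pos rfl]
  -- coefficient at 1 of anything in the range of orbitSum vanishes
  have hrange_coeff : ∀ s : MonoidAlgebra k A, (orbitSum k φ s).coeff (1 : A) = 0 := by
    intro s
    rw [orbitSum_coeff]
    have h6 : ∀ g : G, s.coeff ((φ g).symm (1 : A)) = s.coeff 1 := fun g => by rw [map_one]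
    rw [Finset.sum_congr rfl fun g _ => h6 g, Finset.sum_const, Finset.card_univ,
      nsmul_eq_mul, hGcard, zero_mul]
  have hNZ : NoZeroSMulDivisors k (↥M ⧸ N) := by
    constructor
    intro c x hcx
    rcases eq_or_ne c 0 with hc | hc
    · exact Or.inl hc
    · refine Or.inr ?_
      have := congrArg (fun y => c⁻¹ • y) hcx
      simpa [smul_smul, inv_mul_cancel₀ hc] using this
  apply finrank_eq_one (Submodule.Quotient.mk (⟨1, hone⟩ : M))
  · -- nonzero
    intro hv
    rw [Submodule.Quotient.mk_eq_zero, hN, Submodule.mem_comap] at hv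
    obtain ⟨s, hs⟩ := hv
    have h7 := hrange_coeff s
    rw [show orbitSum k φ s = 1 from hs, hone_coeff] at h7
    exact one_ne_zero h7
  · intro w
    obtain ⟨⟨r, hr⟩, rfl⟩ := Submodule.Quotient.mk_surjective N w
    refine ⟨r.coeff 1, ?_⟩
    rw [← Submodule.Quotient.mk_smul, Submodule.Quotient.eq]
    rw [hN, Submodule.mem_comap]
    set u : MonoidAlgebra k A := (r.coeff 1) • (1 : MonoidAlgebra k A) - r with hu
    have huM : u ∈ invAlg k φ :=
      sub_mem (SMulMemClass.smul_mem _ hone) hr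
    have huinv : ∀ (g : G) (a : A), u.coeff (φ g a) = u.coeff a := fun g a => inv_coeff φ huM g a
    have hu1 : u.coeff 1 = 0 := by
      rw [hu, sub_coeff, smul_coeff, hone_coeff, mul_one, sub_self]
    obtain ⟨s, hs⟩ := exists_preimage φ hfree u.coeff.support.card u le_rfl huinv hu1
    refine ⟨s, ?_⟩
    rw [hs]
    rfl
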